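/- If a bimonad H has both a left antipode S (m ∘ SH ∘ δ = e∘ε) and a right antipode S' (m ∘ HS' ∘ δ = e∘ε), and γ = Hm∘δH is an epimorphism, then S = S', so H has an antipode. -/

import Mathlib

open CategoryTheory

universe v u

variable {A : Type u} [Category.{v} A]

/-- `(H, m, e)` is a monad on `A` (stated componentwise). -/
structure IsMonadOn (H : A ⥤ A) (m : H ⋙ H ⟶ H) (e : 𝟭 A ⟶ H) : Prop where
  assoc : ∀ a : A, H.map (m.app a) ≫ m.app a = m.app (H.obj a) ≫ m.app a
  unit_left : ∀ a : A, e.app (H.obj a) ≫ m.app a = 𝟙 (H.obj a)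
  unit_right : ∀ a : A, H.map (e.app a) ≫ m.app a = 𝟙 (H.obj a)

/-- `(H, δ, ε)` is a comonad on `A` (stated componentwise). -/
structure IsComonadOn (H : A ⥤ A) (δ : H ⟶ H ⋙ H) (ε : H ⟶ 𝟭 A) : Prop where
  coassoc : ∀ a : A, δ.app a ≫ H.map (δ.app a) = δ.app a ≫ δ.app (H.obj a)
  counit_left : ∀ a : A, δ.app a ≫ ε.app (H.obj a) = 𝟙 (H.obj a)
  counit_right : ∀ a : A, δ.app a ≫ H.map (ε.app a) = 𝟙 (H.obj a)

/-- `(H, m, e, δ, ε, lam)` is a bimonad on `A`: a monad and a comonad such that `ε` is a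
monad morphism to the identity monad, `e` is a comonad morphism from the identity comonad,
and `lam : HH ⟶ HH` is a mixed distributive law (entwining) from the monad to the comonad
satisfying `δ ∘ m = Hm ∘ lam H ∘ Hδ`. -/
structure IsBimonadOn (H : A ⥤ A) (m : H ⋙ H ⟶ H) (e : 𝟭 A ⟶ H)
    (δ : H ⟶ H ⋙ H) (ε : H ⟶ 𝟭 A) (lam : H ⋙ H ⟶ H ⋙ H) : Prop where
  monad : IsMonadOn H m e
  comonad : IsComonadOn H δ ε
  ent_unit : ∀ a : A, e.app (H.obj a) ≫ lam.app a = H.map (e.app a)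
  ent_counit : ∀ a : A, lam.app a ≫ ε.app (H.obj a) = H.map (ε.app a)
  ent_delta : ∀ a : A, lam.app a ≫ δ.app (H.obj a)
      = H.map (δ.app a) ≫ lam.app (H.obj a) ≫ H.map (lam.app a)
  ent_mul : ∀ a : A, m.app (H.obj a) ≫ lam.app a
      = H.map (lam.app a) ≫ lam.app (H.obj a) ≫ H.map (m.app a)
  compat : ∀ a : A, m.app a ≫ δ.app a
      = H.map (δ.app a) ≫ lam.app (H.obj a) ≫ H.map (m.app a)
  counit_monad : ∀ a : A, m.app a ≫ ε.app a = H.map (ε.app a) ≫ ε.app a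
  unit_comonad : ∀ a : A, e.app a ≫ δ.app a = e.app a ≫ e.app (H.obj a)
  counit_unit : ∀ a : A, e.app a ≫ ε.app a = 𝟙 a

/-- If a bimonad `H` has a left antipode `S` and a right antipode `S'`, and
`γ = Hm ∘ δH` is an epimorphism, then `S = S'`, so `H` has an antipode. -/
theorem stmt11 (H : A ⥤ A) (m : H ⋙ H ⟶ H) (e : 𝟭 A ⟶ H)
    (δ : H ⟶ H ⋙ H) (ε : H ⟶ 𝟭 A) (lam : H ⋙ H ⟶ H ⋙ H)
    (hB : IsBimonadOn H m e δ ε lam)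
    (hγ : Epi (Functor.whiskerLeft H δ ≫ Functor.whiskerRight m H : H ⋙ H ⟶ H ⋙ H))
    (S S' : H ⟶ H)
    (hS : ∀ a : A, δ.app a ≫ S.app (H.obj a) ≫ m.app a = ε.app a ≫ e.app a)
    (hS' : ∀ a : A, δ.app a ≫ H.map (S'.app a) ≫ m.app a = ε.app a ≫ e.app a) :
    S = S' := by
  ext a
  have key : δ.app a ≫ S.app (H.obj a) ≫
      H.map (δ.app a ≫ H.map (S'.app a) ≫ m.app a) ≫ m.app a = S.app a := by
    rw [hS' a]
    simp only [Functor.map_comp, Category.assoc]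
    rw [hB.monad.unit_right a]
    simp only [Functor.id_obj, Functor.comp_obj, Category.comp_id]
    have hnat : S.app (H.obj a) ≫ H.map (ε.app a) = H.map (ε.app a) ≫ S.app a := by
      simpa using (S.naturality (ε.app a)).symm
    rw [hnat, ← Category.assoc, hB.comonad.counit_right a, Category.id_comp]
  have key' : δ.app a ≫ S.app (H.obj a) ≫
      H.map (δ.app a ≫ H.map (S'.app a) ≫ m.app a) ≫ m.app a = S'.app a := by
    simp only [Functor.map_comp, Category.assoc]
    have hnatS : S.app (H.obj a) ≫ H.map (δ.app a)
        = H.map (δ.app a) ≫ S.app (H.obj (H.obj a)) := by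
      simpa using (S.naturality (δ.app a)).symm
    rw [reassoc_of% hnatS, ← Category.assoc, hB.comonad.coassoc a, Category.assoc]
    have hm : H.map (m.app a) ≫ m.app a = m.app (H.obj a) ≫ m.app a := hB.monad.assoc a
    rw [hm]
    have hnatm : H.map (H.map (S'.app a)) ≫ m.app (H.obj a)
        = m.app (H.obj a) ≫ H.map (S'.app a) := by
      simpa using m.naturality (S'.app a)
    rw [reassoc_of% hnatm]
    simp only [Functor.id_obj, Functor.comp_obj, Category.assoc]
    rw [reassoc_of% (hS (H.obj a))]
    have hnate : e.app (H.obj a) ≫ H.map (S'.app a) = S'.app a ≫ e.app (H.obj a) := by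
      simpa using (e.naturality (S'.app a)).symm
    rw [reassoc_of% hnate, hB.monad.unit_left a, Category.comp_id, ← Category.assoc,
      hB.comonad.counit_left a, Category.id_comp]
  rw [← key, key']
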